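/- Let d ≥ 1, let x₀ ∈ ℝ^d, μ > 0, let u ∈ ℝ^d be a unit vector (‖u‖₂ = 1), let b ∈ ℝ, and define f(x) := (⟨u, x⟩ + b)/(2μ). Then for every interval I ⊆ ℝ of length η ≥ 0, Vol({x ∈ B₂(x₀, μ) : f(x) ∈ I}) / Vol(B₂(x₀, μ)) ≤ 2η · V_{d−1}/V_d. -/

import Mathlib

open scoped RealInnerProductSpace

/-- `V_d = π^{d/2} / Γ(d/2 + 1)`, the Lebesgue volume of the `d`-dimensional
Euclidean unit ball (with `V_0 = 1`). -/
noncomputable def unitBallVol (d : ℕ) : ℝ :=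
  Real.pi ^ ((d : ℝ) / 2) / Real.Gamma ((d : ℝ) / 2 + 1)

open MeasureTheory

lemma unitBallVol_pos (n : ℕ) : 0 < unitBallVol n := by
  apply div_pos (Real.rpow_pos_of_pos Real.pi_pos _)
  apply Real.Gamma_pos_of_pos
  positivity

lemma sqrt_pi_pow (n : ℕ) : Real.sqrt Real.pi ^ n = Real.pi ^ ((n : ℝ) / 2) := by
  rw [Real.sqrt_eq_rpow, ← Real.rpow_natCast (Real.pi ^ (1/2 : ℝ)) n,
    ← Real.rpow_mul Real.pi_pos.le]
  congr 1
  ring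

lemma euclidean_volume_ball (n : ℕ) (c : EuclideanSpace ℝ (Fin n)) (μ : ℝ) (hμ : 0 < μ) :
    volume (Metric.ball c μ) = ENNReal.ofReal μ ^ n * ENNReal.ofReal (unitBallVol n) := by
  cases n with
  | zero =>
    have h0 : (0 : EuclideanSpace ℝ (Fin 0)) ∈ Metric.ball c μ := by
      rw [Metric.mem_ball, EuclideanSpace.dist_eq]
      simp [hμ]
    rw [volume_euclideanSpace_eq_dirac, Measure.dirac_apply' _ measurableSet_ball,
      Set.indicator_of_mem h0]
    simp [unitBallVol, Real.Gamma_one]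
  | succ m =>
    rw [EuclideanSpace.volume_ball, Fintype.card_fin]
    simp only [unitBallVol]
    rw [sqrt_pi_pow]

/-- For a unit vector `u ∈ ℝ^d`, `b ∈ ℝ`, `μ > 0`, and
`f(x) = (⟪u, x⟫ + b)/(2μ)`, the fraction of the ball `B₂(x₀, μ)` mapped by `f` into any
interval `I` of length `η` is at most `2η · V_{d-1}/V_d`. -/
theorem volume_fraction_slab_le
    (d : ℕ) (hd : 1 ≤ d) (x₀ : EuclideanSpace ℝ (Fin d)) (μ : ℝ) (hμ : 0 < μ)
    (u : EuclideanSpace ℝ (Fin d)) (hu : ‖u‖ = 1) (b : ℝ)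
    (η : ℝ) (hη : 0 ≤ η) (I : Set ℝ) (hI : ∃ a : ℝ, I ⊆ Set.Icc a (a + η)) :
    MeasureTheory.volume {x ∈ Metric.ball x₀ μ | (⟪u, x⟫ + b) / (2 * μ) ∈ I} /
        MeasureTheory.volume (Metric.ball x₀ μ) ≤
      ENNReal.ofReal (2 * η * (unitBallVol (d - 1) / unitBallVol d)) := by
  obtain ⟨n, rfl⟩ : ∃ n, d = n + 1 := ⟨d - 1, (Nat.succ_pred_eq_of_pos hd).symm⟩
  obtain ⟨a, haI⟩ := hI
  have h2μ : (0:ℝ) < 2 * μ := by linarith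
  -- orthonormal basis with B 0 = u
  have horth : Orthonormal ℝ (({0} : Set (Fin (n+1))).restrict fun _ => u) := by
    refine ⟨fun i => by exact hu, fun {i j} hij => absurd (Subsingleton.elim i j) hij⟩
  obtain ⟨B, hB⟩ := horth.exists_orthonormalBasis_extension_of_card_eq
    (by simp [finrank_euclideanSpace])
  have hB0 : B 0 = u := hB 0 rfl
  set c : EuclideanSpace ℝ (Fin (n+1)) := B.repr x₀ with hc
  set c' : EuclideanSpace ℝ (Fin n) := (WithLp.equiv 2 _).symm (fun i => c i.succ) with hc'
  set J : Set ℝ := Set.Icc (2*μ*a - b) (2*μ*a - b + 2*μ*η) with hJ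
  set T : Set (EuclideanSpace ℝ (Fin (n+1))) :=
    {y | y 0 ∈ J ∧ (WithLp.equiv 2 _).symm (fun i => y i.succ) ∈ Metric.ball c' μ} with hT
  -- step 1: inclusion
  have hsub : {x ∈ Metric.ball x₀ μ | (⟪u, x⟫ + b) / (2 * μ) ∈ I} ⊆ ⇑B.repr ⁻¹' T := by
    rintro x ⟨hxball, hxI⟩
    obtain ⟨ha1, ha2⟩ := haI hxI
    have h0 : B.repr x 0 = ⟪u, x⟫ := by rw [B.repr_apply_apply, hB0]
    have hJ0 : B.repr x 0 ∈ J := by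
      rw [h0]
      have h1 : a * (2*μ) ≤ ⟪u, x⟫ + b := (le_div_iff₀ h2μ).mp ha1
      have h2 : ⟪u, x⟫ + b ≤ (a + η) * (2*μ) := (div_le_iff₀ h2μ).mp ha2
      constructor <;> [linarith; linarith]
    refine ⟨hJ0, ?_⟩
    have hdist : dist (B.repr x) c < μ := by
      rw [hc, B.repr.dist_map]
      exact hxball
    have key : dist ((WithLp.equiv 2 _).symm (fun i => B.repr x i.succ)
          : EuclideanSpace ℝ (Fin n)) c' ≤ dist (B.repr x) c := by
      rw [EuclideanSpace.dist_eq, EuclideanSpace.dist_eq]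
      apply Real.sqrt_le_sqrt
      rw [Fin.sum_univ_succ]
      simp only [hc', WithLp.equiv_symm_apply, PiLp.toLp_apply]
      have h01 : (0:ℝ) ≤ dist (B.repr x 0) (c 0) ^ 2 := sq_nonneg _
      exact le_add_of_nonneg_left h01
    exact Metric.mem_ball.mpr (lt_of_le_of_lt key hdist)
  -- step 2: bound volume of T
  set K : Set (Fin n → ℝ) :=
    ⇑(MeasurableEquiv.toLp 2 (Fin n → ℝ)).symm.symm ⁻¹' Metric.ball c' μ with hK
  have hKmeas : MeasurableSet K :=
    (MeasurableEquiv.toLp 2 (Fin n → ℝ)).symm.symm.measurable measurableSet_ball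
  set F := MeasurableEquiv.piFinSuccAbove (fun _ : Fin (n+1) => ℝ) 0 with hF
  set Tpi : Set (Fin (n+1) → ℝ) := ⇑(MeasurableEquiv.toLp 2 (Fin (n+1) → ℝ)).symm.symm ⁻¹' T
    with hTpi
  have hTT : T = ⇑(MeasurableEquiv.toLp 2 (Fin (n+1) → ℝ)).symm ⁻¹' Tpi := by
    rw [hTpi, ← Set.preimage_comp]
    simp [Set.preimage_id']
  have hTpi_sub : Tpi ⊆ ⇑F ⁻¹' (J ×ˢ K) := by
    intro y hy
    obtain ⟨hy1, hy2⟩ := hy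
    refine ⟨hy1, ?_⟩
    show Fin.removeNth 0 y ∈ K
    have hrn : Fin.removeNth 0 y = fun i => y i.succ := by
      ext i; simp [Fin.removeNth]
    rw [hK, Set.mem_preimage, hrn]
    exact hy2
  have step1 : volume T ≤ volume Tpi := by
    rw [hTT]
    refine le_trans (Measure.le_map_apply
      (EuclideanSpace.volume_preserving_symm_measurableEquiv_toLp
        (Fin (n+1))).measurable.aemeasurable Tpi) ?_
    rw [(EuclideanSpace.volume_preserving_symm_measurableEquiv_toLp (Fin (n+1))).map_eq]
  have step2 : volume Tpi ≤ volume (J ×ˢ K) := by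
    refine le_trans (measure_mono hTpi_sub) (le_of_eq ?_)
    exact (volume_preserving_piFinSuccAbove (fun _ : Fin (n+1) => ℝ) 0).measure_preimage
      ((measurableSet_Icc.prod hKmeas).nullMeasurableSet)
  have stepJ : volume J ≤ ENNReal.ofReal (2*μ*η) := by
    rw [hJ, Real.volume_Icc]
    apply le_of_eq
    congr 1
    ring
  have stepK : volume K ≤ ENNReal.ofReal μ ^ n * ENNReal.ofReal (unitBallVol n) := by
    have mp : MeasurePreserving (⇑(MeasurableEquiv.toLp 2 (Fin n → ℝ)).symm.symm)
        volume volume :=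
      MeasurePreserving.symm (MeasurableEquiv.toLp 2 (Fin n → ℝ)).symm
        (EuclideanSpace.volume_preserving_symm_measurableEquiv_toLp (Fin n))
    refine le_trans (Measure.le_map_apply mp.measurable.aemeasurable _) ?_
    rw [mp.map_eq]
    exact (euclidean_volume_ball n c' μ hμ).le
  have hvolT : volume T ≤ ENNReal.ofReal (2*μ*η) *
      (ENNReal.ofReal μ ^ n * ENNReal.ofReal (unitBallVol n)) := by
    refine le_trans step1 (le_trans step2 ?_)
    rw [Measure.volume_eq_prod, Measure.prod_prod]
    exact mul_le_mul' stepJ stepK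
  -- step 3: combine
  have hnum : volume {x ∈ Metric.ball x₀ μ | (⟪u, x⟫ + b) / (2 * μ) ∈ I}
      ≤ ENNReal.ofReal (2*μ*η * (μ^n * unitBallVol n)) := by
    calc volume {x ∈ Metric.ball x₀ μ | (⟪u, x⟫ + b) / (2 * μ) ∈ I}
        ≤ volume (⇑B.repr ⁻¹' T) := measure_mono hsub
      _ ≤ (Measure.map (⇑B.repr) volume) T :=
          Measure.le_map_apply B.measurePreserving_repr.measurable.aemeasurable T
      _ = volume T := by rw [B.measurePreserving_repr.map_eq]
      _ ≤ ENNReal.ofReal (2*μ*η) * (ENNReal.ofReal μ ^ n * ENNReal.ofReal (unitBallVol n)) :=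
          hvolT
      _ = ENNReal.ofReal (2*μ*η * (μ^n * unitBallVol n)) := by
          rw [ENNReal.ofReal_mul (p := 2*μ*η) (by positivity),
            ENNReal.ofReal_mul (p := μ^n) (by positivity), ENNReal.ofReal_pow hμ.le]
  have hden : volume (Metric.ball x₀ μ) = ENNReal.ofReal (μ^(n+1) * unitBallVol (n+1)) := by
    rw [euclidean_volume_ball (n+1) x₀ μ hμ, ENNReal.ofReal_mul (by positivity),
      ENNReal.ofReal_pow hμ.le]
  have hDpos : (0:ℝ) < μ^(n+1) * unitBallVol (n+1) :=
    mul_pos (by positivity) (unitBallVol_pos _)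
  calc volume {x ∈ Metric.ball x₀ μ | (⟪u, x⟫ + b) / (2 * μ) ∈ I} /
        volume (Metric.ball x₀ μ)
      ≤ ENNReal.ofReal (2*μ*η * (μ^n * unitBallVol n)) /
        ENNReal.ofReal (μ^(n+1) * unitBallVol (n+1)) := by
        rw [hden]; exact ENNReal.div_le_div hnum le_rfl
    _ = ENNReal.ofReal (2*μ*η * (μ^n * unitBallVol n) / (μ^(n+1) * unitBallVol (n+1))) :=
        (ENNReal.ofReal_div_of_pos hDpos).symm
    _ = ENNReal.ofReal (2 * η * (unitBallVol ((n+1) - 1) / unitBallVol (n+1))) := by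
        congr 1
        simp only [Nat.add_sub_cancel]
        have hV : unitBallVol (n+1) ≠ 0 := (unitBallVol_pos (n+1)).ne'
        have hμ0 : μ ≠ 0 := hμ.ne'
        field_simp
        ring
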